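/- Let G_1, G_2 be graphs, each with a distinguished leaf f_i, and let G = (G_1, f_1) ∗ (G_2, f_2) be obtained by identifying f_1 with f_2 into a vertex v. Let v_i be the neighbour of f_i in G_i. Then the cut sets of G are exactly the sets S_1 ∪ S_2 with S_i a cut set of G_i (i = 1, 2), together with the sets S_1 ∪ S_2 ∪ {v} with S_i a cut set of G_i not containing v_i (i = 1, 2). -/

import Mathlib

open SimpleGraph Finset

/-- Number of connected components of the subgraph of `G` induced on the complement of `S`. -/
noncomputable def numComp {V : Type*} [Fintype V] (G : SimpleGraph V) (S : Finset V) : ℕ :=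
  Nat.card (G.induce ((↑S : Set V)ᶜ)).ConnectedComponent

/-- `S` is a cut set of `G`. -/
def IsCutSet {V : Type*} [Fintype V] [DecidableEq V] (G : SimpleGraph V) (S : Finset V) : Prop :=
  S = ∅ ∨ (S ≠ ∅ ∧ ∀ i ∈ S, numComp G (S.erase i) < numComp G S)

/-- The combinatorial condition equivalent to unmixedness of the binomial edge ideal. -/
def Unmixed {V : Type*} [Fintype V] [DecidableEq V] (G : SimpleGraph V) : Prop :=
  ∀ S : Finset V, IsCutSet G S → numComp G S = S.card + 1

/-- Number of connected components of the subgraph of `G` induced on `A \ S`. -/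
noncomputable def numCompIn {V : Type*} (G : SimpleGraph V) (A S : Finset V) : ℕ :=
  Nat.card (G.induce ((↑A : Set V) \ (↑S : Set V))).ConnectedComponent

/-- `S` is a cut set of the subgraph of `G` induced on `A`. -/
def IsCutSetIn {V : Type*} [DecidableEq V] (G : SimpleGraph V) (A S : Finset V) : Prop :=
  S ⊆ A ∧ (S = ∅ ∨ (S ≠ ∅ ∧ ∀ i ∈ S, numCompIn G A (S.erase i) < numCompIn G A S))

section Core
variable {V : Type*} {G : SimpleGraph V}

private lemma reach_eq_of_adj {W : Type*} {H : SimpleGraph W} {β : Sort*} (f : W → β)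
    (h : ∀ a b, H.Adj a b → f a = f b) {a b : W} (hr : H.Reachable a b) : f a = f b := by
  obtain ⟨p⟩ := hr
  induction p with
  | nil => rfl
  | cons hadj p ih => exact (h _ _ hadj).trans ih

/-- inclusion hom between induced subgraphs -/
def inclHom {x s : Set V} (h : x ⊆ s) : G.induce x →g G.induce s :=
  ⟨Set.inclusion h, fun hab => hab⟩

lemma not_reach_general (u x y : Set V) (hxy : ∀ w ∈ u, w ∈ x ∨ w ∈ y)
    (hd : ∀ w, w ∈ x → w ∈ y → False)
    (he : ∀ a b, G.Adj a b → a ∈ x → b ∈ y → False) :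
    ∀ (a b : ↥u) (p : (G.induce u).Walk a b), a.1 ∈ x → b.1 ∈ y → False := by
  intro a b p
  induction p with
  | nil => intro ha hb; exact hd _ ha hb
  | @cons a c b hadj p ih =>
    intro ha hb
    by_cases hcx : c.1 ∈ x
    · exact ih hcx hb
    · exact he a.1 c.1 hadj ha ((hxy c.1 c.2).resolve_left hcx)

variable [Finite V]

lemma split_card (x y : Set V) (hd : ∀ w, w ∈ x → w ∈ y → False)
    (he : ∀ a b, G.Adj a b → a ∈ x → b ∈ y → False) :
    Nat.card (G.induce (x ∪ y)).ConnectedComponent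
      = Nat.card (G.induce x).ConnectedComponent + Nat.card (G.induce y).ConnectedComponent := by
  classical
  rw [← Nat.card_sum]
  apply Nat.card_congr
  have memy : ∀ a : ↥(x ∪ y), a.1 ∉ x → a.1 ∈ y := fun a ha => a.2.resolve_left ha
  have he' : ∀ a b : V, G.Adj a b → a ∈ y → b ∈ x → False := fun a b hab ha hb =>
    he b a hab.symm hb ha
  let f : ↥(x ∪ y) → (G.induce x).ConnectedComponent ⊕ (G.induce y).ConnectedComponent := fun a =>
    if h : a.1 ∈ x then Sum.inl ((G.induce x).connectedComponentMk ⟨a.1, h⟩)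
    else Sum.inr ((G.induce y).connectedComponentMk ⟨a.1, memy a h⟩)
  have hf : ∀ a b, (G.induce (x ∪ y)).Adj a b → f a = f b := by
    intro a b hab
    have hab' : G.Adj a.1 b.1 := hab
    by_cases hax : a.1 ∈ x <;> by_cases hbx : b.1 ∈ x
    · simp only [f, dif_pos hax, dif_pos hbx]
      exact congrArg _ (ConnectedComponent.sound (Adj.reachable hab'))
    · exact absurd (he a.1 b.1 hab' hax (memy b hbx)) id
    · exact absurd (he' a.1 b.1 hab' (memy a hax) hbx) id
    · simp only [f, dif_neg hax, dif_neg hbx]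
      exact congrArg _ (ConnectedComponent.sound (Adj.reachable hab'))
  refine ⟨Quot.lift f (fun a b hr => reach_eq_of_adj f hf hr),
    Sum.elim (ConnectedComponent.map (inclHom Set.subset_union_left))
      (ConnectedComponent.map (inclHom Set.subset_union_right)), ?_, ?_⟩
  · refine Quot.ind ?_
    intro a
    by_cases h : a.1 ∈ x
    · show Sum.elim _ _ (f a) = _
      simp only [f, dif_pos h, Sum.elim_inl, ConnectedComponent.map_mk]
      rfl
    · show Sum.elim _ _ (f a) = _
      simp only [f, dif_neg h, Sum.elim_inr, ConnectedComponent.map_mk]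
      rfl
  · rintro (c | c)
    · refine ConnectedComponent.ind (fun a => ?_) c
      show f _ = _
      exact dif_pos a.2
    · refine ConnectedComponent.ind (fun a => ?_) c
      show f _ = _
      exact dif_neg (fun hx => hd a.1 hx a.2)

/-- The set of components of `s \ {w}` containing a neighbour of `w`. -/
def nbrComps (G : SimpleGraph V) (s : Set V) (w : V) :
    Set (G.induce (s \ {w})).ConnectedComponent :=
  {c | ∃ z : ↥(s \ {w}), G.Adj w z.1 ∧ (G.induce (s \ {w})).connectedComponentMk z = c}

lemma addVertex_card (s : Set V) (w : V) (hw : w ∈ s) :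
    Nat.card (G.induce s).ConnectedComponent + (nbrComps G s w).ncard
      = Nat.card (G.induce (s \ {w})).ConnectedComponent + 1 := by
  classical
  set t := s \ {w} with ht
  set N := nbrComps G s w with hN
  have hsub : t ⊆ s := Set.diff_subset
  have key : Nat.card (G.induce s).ConnectedComponent = Nᶜ.ncard + 1 := by
    rw [← Nat.card_coe_set_eq, ← Nat.card_unique (α := Unit), ← Nat.card_sum]
    apply Nat.card_congr
    let f : ↥s → ↥(Nᶜ) ⊕ Unit := fun a =>
      if h : a.1 = w then Sum.inr ()
      else if hc : (G.induce t).connectedComponentMk ⟨a.1, ⟨a.2, h⟩⟩ ∈ N then Sum.inr ()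
      else Sum.inl ⟨_, hc⟩
    have hf : ∀ a b : ↥s, (G.induce s).Adj a b → f a = f b := by
      intro a b hab
      have hab' : G.Adj a.1 b.1 := hab
      by_cases haw : a.1 = w
      · have hbw : b.1 ≠ w := by
          intro hbw; rw [haw, hbw] at hab'; exact G.loopless.irrefl w hab'
        have hmem : (G.induce t).connectedComponentMk ⟨b.1, ⟨b.2, hbw⟩⟩ ∈ N :=
          ⟨⟨b.1, ⟨b.2, hbw⟩⟩, haw ▸ hab', rfl⟩
        simp only [f, dif_pos haw, dif_neg hbw, dif_pos hmem]
      · by_cases hbw : b.1 = w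
        · have hmem : (G.induce t).connectedComponentMk ⟨a.1, ⟨a.2, haw⟩⟩ ∈ N :=
            ⟨⟨a.1, ⟨a.2, haw⟩⟩, hbw ▸ hab'.symm, rfl⟩
          simp only [f, dif_pos hbw, dif_neg haw, dif_pos hmem]
        · have hcc : (G.induce t).connectedComponentMk ⟨a.1, ⟨a.2, haw⟩⟩
              = (G.induce t).connectedComponentMk ⟨b.1, ⟨b.2, hbw⟩⟩ :=
            ConnectedComponent.sound (Adj.reachable (by exact hab' :
              (G.induce t).Adj ⟨a.1, ⟨a.2, haw⟩⟩ ⟨b.1, ⟨b.2, hbw⟩⟩))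
          simp only [f, dif_neg haw, dif_neg hbw, hcc]
    refine ⟨Quot.lift f (fun a b hr => reach_eq_of_adj f hf hr),
      Sum.elim (fun c => ConnectedComponent.map (inclHom hsub) c.1)
        (fun _ => (G.induce s).connectedComponentMk ⟨w, hw⟩), ?_, ?_⟩
    · refine Quot.ind ?_
      intro a
      show Sum.elim _ _ (f a) = _
      by_cases haw : a.1 = w
      · simp only [f, dif_pos haw, Sum.elim_inr]
        exact congrArg _ (Subtype.ext haw.symm)
      · by_cases hc : (G.induce t).connectedComponentMk ⟨a.1, ⟨a.2, haw⟩⟩ ∈ N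
        · simp only [f, dif_neg haw, dif_pos hc, Sum.elim_inr]
          obtain ⟨z, hzadj, hzc⟩ := hc
          have hr1 : (G.induce s).Reachable ⟨w, hw⟩ ⟨z.1, hsub z.2⟩ :=
            Adj.reachable (by exact hzadj)
          have hr2 : (G.induce t).Reachable z ⟨a.1, ⟨a.2, haw⟩⟩ := ConnectedComponent.eq.mp hzc
          have hr2' := hr2.map (inclHom hsub)
          exact ConnectedComponent.sound (hr1.trans hr2')
        · simp only [f, dif_neg haw, dif_neg hc, Sum.elim_inl, ConnectedComponent.map_mk]
          rfl
    · rintro (⟨c, hc⟩ | ⟨⟩)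
      · revert hc
        refine ConnectedComponent.ind (fun z => ?_) c
        intro hc
        simp only [Sum.elim_inl, ConnectedComponent.map_mk]
        show f _ = _
        have hzw : z.1 ≠ w := z.2.2
        exact (dif_neg hzw).trans (dif_neg hc)
      · simp only [Sum.elim_inr]
        show f _ = _
        simp only [f, dif_pos rfl]
  have key2 : N.ncard + Nᶜ.ncard = Nat.card (G.induce (s \ {w})).ConnectedComponent :=
    Set.ncard_add_ncard_compl N
  omega



lemma isolated_card (s : Set V) (w : V) (hw : w ∈ s)
    (h : ∀ z ∈ s, ¬ G.Adj w z) :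
    Nat.card (G.induce s).ConnectedComponent
      = Nat.card (G.induce (s \ {w})).ConnectedComponent + 1 := by
  have hN : nbrComps G s w = ∅ := by
    rw [Set.eq_empty_iff_forall_notMem]
    rintro c ⟨z, hadj, -⟩
    exact h z.1 z.2.1 hadj
  have := addVertex_card (G := G) s w hw
  rw [hN, Set.ncard_empty] at this
  omega

lemma pendant_card (s : Set V) (w u : V) (hw : w ∈ s) (hu : u ∈ s) (hne : u ≠ w)
    (hadj : G.Adj w u) (huniq : ∀ z ∈ s, G.Adj w z → z = u) :
    Nat.card (G.induce s).ConnectedComponent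
      = Nat.card (G.induce (s \ {w})).ConnectedComponent := by
  have hN : nbrComps G s w
      = {(G.induce (s \ {w})).connectedComponentMk ⟨u, ⟨hu, hne⟩⟩} := by
    ext c
    constructor
    · rintro ⟨z, hzadj, rfl⟩
      have : z.1 = u := huniq z.1 z.2.1 hzadj
      exact congrArg _ (Subtype.ext this)
    · rintro rfl
      exact ⟨⟨u, ⟨hu, hne⟩⟩, hadj, rfl⟩
  have := addVertex_card (G := G) s w hw
  rw [hN, Set.ncard_singleton] at this
  omega

lemma le_card_erase (s : Set V) (w u : V) (hw : w ∈ s)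
    (huniq : ∀ z ∈ s, G.Adj w z → z = u) :
    Nat.card (G.induce (s \ {w})).ConnectedComponent
      ≤ Nat.card (G.induce s).ConnectedComponent := by
  have hN : (nbrComps G s w).ncard ≤ 1 := by
    rw [Set.ncard_le_one (Set.toFinite _)]
    rintro c1 ⟨z1, h1, rfl⟩ c2 ⟨z2, h2, rfl⟩
    have e1 : z1.1 = u := huniq z1.1 z1.2.1 h1
    have e2 : z2.1 = u := huniq z2.1 z2.2.1 h2
    exact congrArg _ (Subtype.ext (e1.trans e2.symm))
  have := addVertex_card (G := G) s w hw
  omega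

lemma two_nbr_card (s : Set V) (w u1 u2 : V) (hw : w ∈ s)
    (h1 : u1 ∈ s \ {w}) (h2 : u2 ∈ s \ {w})
    (ha1 : G.Adj w u1) (ha2 : G.Adj w u2)
    (huniq : ∀ z ∈ s, G.Adj w z → z = u1 ∨ z = u2)
    (hnr : ¬ (G.induce (s \ {w})).Reachable ⟨u1, h1⟩ ⟨u2, h2⟩) :
    Nat.card (G.induce s).ConnectedComponent + 1
      = Nat.card (G.induce (s \ {w})).ConnectedComponent := by
  have hN : nbrComps G s w
      = {(G.induce (s \ {w})).connectedComponentMk ⟨u1, h1⟩,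
         (G.induce (s \ {w})).connectedComponentMk ⟨u2, h2⟩} := by
    ext c
    constructor
    · rintro ⟨z, hzadj, rfl⟩
      rcases huniq z.1 z.2.1 hzadj with h | h
      · exact Or.inl (congrArg _ (Subtype.ext h))
      · exact Or.inr (congrArg _ (Subtype.ext h))
    · rintro (rfl | rfl)
      · exact ⟨⟨u1, h1⟩, ha1, rfl⟩
      · exact ⟨⟨u2, h2⟩, ha2, rfl⟩
  have hcard : (nbrComps G s w).ncard = 2 := by
    rw [hN]
    exact Set.ncard_pair (fun h => hnr (ConnectedComponent.eq.mp h))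
  have := addVertex_card (G := G) s w hw
  omega

lemma nc_congr {x y : Set V} (h : x = y) :
    Nat.card (G.induce x).ConnectedComponent = Nat.card (G.induce y).ConnectedComponent := by
  subst h; rfl

end Core
theorem stmt9 {V : Type*} [Fintype V] [DecidableEq V] (G : SimpleGraph V)
    (A B : Finset V) (v v1 v2 : V)
    (hcover : A ∪ B = Finset.univ) (hint : A ∩ B = {v})
    (hsplit : ∀ a b, G.Adj a b → (a ∈ A ∧ b ∈ A) ∨ (a ∈ B ∧ b ∈ B))
    (hconn1 : (G.induce (↑A : Set V)).Connected)
    (hconn2 : (G.induce (↑B : Set V)).Connected)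
    (hv1A : v1 ∈ A) (hv2B : v2 ∈ B) (hadj1 : G.Adj v v1) (hadj2 : G.Adj v v2)
    (huniq1 : ∀ w ∈ A, G.Adj v w → w = v1)
    (huniq2 : ∀ w ∈ B, G.Adj v w → w = v2) :
    ∀ S : Finset V, IsCutSet G S ↔
      ((∃ S1 S2 : Finset V, IsCutSetIn G A S1 ∧ IsCutSetIn G B S2 ∧ S = S1 ∪ S2) ∨
       (∃ S1 S2 : Finset V, IsCutSetIn G A S1 ∧ IsCutSetIn G B S2 ∧
          v1 ∉ S1 ∧ v2 ∉ S2 ∧ S = S1 ∪ S2 ∪ {v})) := by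
  classical
  have hvAB : v ∈ A ∩ B := by rw [hint]; exact Finset.mem_singleton_self v
  have hvA : v ∈ A := (Finset.mem_inter.mp hvAB).1
  have hvB : v ∈ B := (Finset.mem_inter.mp hvAB).2
  have hv1v : v1 ≠ v := fun h => G.loopless.irrefl v (h ▸ hadj1)
  have hv2v : v2 ≠ v := fun h => G.loopless.irrefl v (h ▸ hadj2)
  have hABv : ∀ w, w ∈ A → w ∈ B → w = v := fun w ha hb =>
    Finset.mem_singleton.mp (hint ▸ Finset.mem_inter.mpr ⟨ha, hb⟩)
  have hv1B : v1 ∉ B := fun h => hv1v (hABv v1 hv1A h)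
  have hv2A : v2 ∉ A := fun h => hv2v (hABv v2 h hv2B)
  have hmemAB : ∀ w : V, w ∈ A ∨ w ∈ B := fun w =>
    Finset.mem_union.mp (by rw [hcover]; exact Finset.mem_univ w)
  have hnbr : ∀ z, G.Adj v z → z = v1 ∨ z = v2 := by
    intro z h
    rcases hsplit v z h with ⟨-, hz⟩ | ⟨-, hz⟩
    · exact Or.inl (huniq1 z hz h)
    · exact Or.inr (huniq2 z hz h)
  -- congruence for numCompIn
  have hcongrIn : ∀ (C T T' : Finset V), (∀ w ∈ C, (w ∈ T ↔ w ∈ T')) →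
      numCompIn G C T = numCompIn G C T' := by
    intro C T T' h
    unfold numCompIn
    have hset : (↑C : Set V) \ ↑T = (↑C : Set V) \ ↑T' := by
      ext w
      simp only [Set.mem_diff, Finset.mem_coe]
      exact and_congr_right fun hw => not_congr (h w hw)
    rw [hset]
  -- L1 : splitting when v ∈ S
  have hL1 : ∀ S : Finset V, v ∈ S → numComp G S = numCompIn G A S + numCompIn G B S := by
    intro S hvS
    have hxy : ((↑S : Set V))ᶜ = ((↑A : Set V) \ ↑S) ∪ ((↑B : Set V) \ ↑S) := by
      ext w
      simp only [Set.mem_compl_iff, Set.mem_union, Set.mem_diff, Finset.mem_coe]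
      constructor
      · intro hw
        rcases hmemAB w with h | h
        · exact Or.inl ⟨h, hw⟩
        · exact Or.inr ⟨h, hw⟩
      · rintro (⟨-, hw⟩ | ⟨-, hw⟩) <;> exact hw
    unfold numComp numCompIn
    rw [hxy]
    refine split_card _ _ ?_ ?_
    · rintro w ⟨hwA, hwS⟩ ⟨hwB, -⟩
      exact hwS (by rw [hABv w hwA hwB]; exact hvS)
    · rintro a b hab ⟨haA, haS⟩ ⟨hbB, hbS⟩
      rcases hsplit a b hab with ⟨-, hbA⟩ | ⟨haB, -⟩
      · exact hbS (by rw [hABv b hbA hbB]; exact hvS)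
      · exact haS (by rw [hABv a haA haB]; exact hvS)
  -- L2 : splitting when v ∉ S
  have hL2 : ∀ S : Finset V, v ∉ S → numComp G S + 1 = numCompIn G A S + numCompIn G B S := by
    intro S hvS
    set x : Set V := ↑A \ ↑S with hxdef
    set y : Set V := ↑B \ ↑S with hydef
    have hvx : v ∈ x := ⟨hvA, hvS⟩
    have hvy : v ∈ y := ⟨hvB, hvS⟩
    have hs : ((↑S : Set V))ᶜ = x ∪ y := by
      ext w
      simp only [hxdef, hydef, Set.mem_compl_iff, Set.mem_union, Set.mem_diff, Finset.mem_coe]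
      constructor
      · intro hw
        rcases hmemAB w with h | h
        · exact Or.inl ⟨h, hw⟩
        · exact Or.inr ⟨h, hw⟩
      · rintro (⟨-, hw⟩ | ⟨-, hw⟩) <;> exact hw
    have hd' : ∀ w, w ∈ x \ {v} → w ∈ y \ {v} → False := by
      rintro w ⟨⟨hwA, -⟩, hwv⟩ ⟨⟨hwB, -⟩, -⟩
      exact hwv (hABv w hwA hwB)
    have he' : ∀ a b, G.Adj a b → a ∈ x \ {v} → b ∈ y \ {v} → False := by
      rintro a b hab ⟨⟨haA, -⟩, hav⟩ ⟨⟨hbB, -⟩, hbv⟩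
      rcases hsplit a b hab with ⟨-, hbA⟩ | ⟨haB, -⟩
      · exact hbv (hABv b hbA hbB)
      · exact hav (hABv a haA haB)
    have htsplit : Nat.card (G.induce ((x ∪ y) \ {v})).ConnectedComponent
        = Nat.card (G.induce (x \ {v})).ConnectedComponent
          + Nat.card (G.induce (y \ {v})).ConnectedComponent := by
      rw [nc_congr (Set.union_diff_distrib : (x ∪ y) \ {v} = (x \ {v}) ∪ (y \ {v}))]
      exact split_card _ _ hd' he'
    unfold numComp numCompIn
    rw [hs, ← hxdef, ← hydef]
    by_cases hv1S : v1 ∈ S <;> by_cases hv2S : v2 ∈ S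
    · -- both neighbours removed : v isolated everywhere
      have hiso_s : ∀ z ∈ x ∪ y, ¬ G.Adj v z := by
        rintro z (⟨-, hz⟩ | ⟨-, hz⟩) hadj <;>
          rcases hnbr z hadj with rfl | rfl <;> first | exact hz hv1S | exact hz hv2S
      have hiso_x : ∀ z ∈ x, ¬ G.Adj v z := by
        rintro z ⟨hzA, hz⟩ hadj
        rcases hnbr z hadj with rfl | rfl
        · exact hz hv1S
        · exact hv2A hzA
      have hiso_y : ∀ z ∈ y, ¬ G.Adj v z := by
        rintro z ⟨hzB, hz⟩ hadj
        rcases hnbr z hadj with rfl | rfl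
        · exact hv1B hzB
        · exact hz hv2S
      have e1 := isolated_card (G := G) (x ∪ y) v (Or.inl hvx) hiso_s
      have e2 := isolated_card (G := G) x v hvx hiso_x
      have e3 := isolated_card (G := G) y v hvy hiso_y
      omega
    · -- v1 ∈ S, v2 ∉ S : pendant towards v2
      have huq_s : ∀ z ∈ x ∪ y, G.Adj v z → z = v2 := by
        rintro z (⟨-, hz⟩ | ⟨-, hz⟩) hadj <;> rcases hnbr z hadj with rfl | rfl <;>
          first | exact absurd hv1S hz | rfl
      have hiso_x : ∀ z ∈ x, ¬ G.Adj v z := by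
        rintro z ⟨hzA, hz⟩ hadj
        rcases hnbr z hadj with rfl | rfl
        · exact hz hv1S
        · exact hv2A hzA
      have huq_y : ∀ z ∈ y, G.Adj v z → z = v2 := by
        rintro z ⟨hzB, -⟩ hadj
        rcases hnbr z hadj with rfl | rfl
        · exact absurd hzB hv1B
        · rfl
      have e1 := pendant_card (G := G) (x ∪ y) v v2 (Or.inl hvx) (Or.inr ⟨hv2B, hv2S⟩)
        hv2v hadj2 huq_s
      have e2 := isolated_card (G := G) x v hvx hiso_x
      have e3 := pendant_card (G := G) y v v2 hvy ⟨hv2B, hv2S⟩ hv2v hadj2 huq_y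
      omega
    · -- v1 ∉ S, v2 ∈ S : pendant towards v1
      have huq_s : ∀ z ∈ x ∪ y, G.Adj v z → z = v1 := by
        rintro z (⟨-, hz⟩ | ⟨-, hz⟩) hadj <;> rcases hnbr z hadj with rfl | rfl <;>
          first | exact absurd hv2S hz | rfl
      have huq_x : ∀ z ∈ x, G.Adj v z → z = v1 := by
        rintro z ⟨hzA, -⟩ hadj
        rcases hnbr z hadj with rfl | rfl
        · rfl
        · exact absurd hzA hv2A
      have hiso_y : ∀ z ∈ y, ¬ G.Adj v z := by
        rintro z ⟨hzB, hz⟩ hadj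
        rcases hnbr z hadj with rfl | rfl
        · exact hv1B hzB
        · exact hz hv2S
      have e1 := pendant_card (G := G) (x ∪ y) v v1 (Or.inl hvx) (Or.inl ⟨hv1A, hv1S⟩)
        hv1v hadj1 huq_s
      have e2 := pendant_card (G := G) x v v1 hvx ⟨hv1A, hv1S⟩ hv1v hadj1 huq_x
      have e3 := isolated_card (G := G) y v hvy hiso_y
      omega
    · -- both neighbours present : v is a bridge
      have hm1 : v1 ∈ (x ∪ y) \ {v} := ⟨Or.inl ⟨hv1A, hv1S⟩, hv1v⟩
      have hm2 : v2 ∈ (x ∪ y) \ {v} := ⟨Or.inr ⟨hv2B, hv2S⟩, hv2v⟩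
      have huq_s : ∀ z ∈ x ∪ y, G.Adj v z → z = v1 ∨ z = v2 := fun z _ hadj => hnbr z hadj
      have hnr : ¬ (G.induce ((x ∪ y) \ {v})).Reachable ⟨v1, hm1⟩ ⟨v2, hm2⟩ := by
        intro hr
        obtain ⟨p⟩ := hr
        refine not_reach_general ((x ∪ y) \ {v}) (x \ {v}) (y \ {v}) ?_ hd' he' _ _ p
          ⟨⟨hv1A, hv1S⟩, hv1v⟩ ⟨⟨hv2B, hv2S⟩, hv2v⟩
        rintro w ⟨(hw | hw), hwv⟩
        · exact Or.inl ⟨hw, hwv⟩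
        · exact Or.inr ⟨hw, hwv⟩
      have e1 := two_nbr_card (G := G) (x ∪ y) v v1 v2 (Or.inl hvx) hm1 hm2 hadj1 hadj2
        huq_s hnr
      have huq_x : ∀ z ∈ x, G.Adj v z → z = v1 := by
        rintro z ⟨hzA, -⟩ hadj
        rcases hnbr z hadj with rfl | rfl
        · rfl
        · exact absurd hzA hv2A
      have huq_y : ∀ z ∈ y, G.Adj v z → z = v2 := by
        rintro z ⟨hzB, -⟩ hadj
        rcases hnbr z hadj with rfl | rfl
        · exact absurd hzB hv1B
        · rfl
      have e2 := pendant_card (G := G) x v v1 hvx ⟨hv1A, hv1S⟩ hv1v hadj1 huq_x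
      have e3 := pendant_card (G := G) y v v2 hvy ⟨hv2B, hv2S⟩ hv2v hadj2 huq_y
      omega
  -- pendant / isolated / mono lemmas for the A side
  have hA_sets : ∀ T : Finset V, v ∈ T →
      ((↑A : Set V) \ ↑(T.erase v)) \ {v} = (↑A : Set V) \ ↑T := by
    intro T hvT
    ext w
    simp only [Set.mem_diff, Finset.mem_coe, Finset.mem_erase, Set.mem_singleton_iff]
    constructor
    · rintro ⟨⟨hwA, hw⟩, hwv⟩
      exact ⟨hwA, fun hwT => hw ⟨hwv, hwT⟩⟩
    · rintro ⟨hwA, hw⟩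
      have hwv : w ≠ v := fun h => hw (h ▸ hvT)
      exact ⟨⟨hwA, fun h => hw h.2⟩, hwv⟩
  have hA_mem : ∀ T : Finset V, v ∈ (↑A : Set V) \ ↑(T.erase v) :=
    fun T => ⟨hvA, fun h => (Finset.mem_erase.mp h).1 rfl⟩
  have hA_uq : ∀ (T : Finset V), ∀ z ∈ (↑A : Set V) \ ↑(T.erase v), G.Adj v z → z = v1 := by
    rintro T z ⟨hzA, -⟩ hadj
    rcases hnbr z hadj with rfl | rfl
    · rfl
    · exact absurd hzA hv2A
  have hA_pend : ∀ T : Finset V, v ∈ T → v1 ∉ T →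
      numCompIn G A (T.erase v) = numCompIn G A T := by
    intro T hvT h1T
    unfold numCompIn
    rw [← hA_sets T hvT]
    exact pendant_card (G := G) _ v v1 (hA_mem T)
      ⟨hv1A, fun h => h1T (Finset.mem_of_mem_erase h)⟩ hv1v hadj1 (hA_uq T)
  have hA_iso : ∀ T : Finset V, v ∈ T → v1 ∈ T →
      numCompIn G A (T.erase v) = numCompIn G A T + 1 := by
    intro T hvT h1T
    unfold numCompIn
    rw [← hA_sets T hvT]
    refine isolated_card (G := G) _ v (hA_mem T) ?_
    intro z hz hadj
    rcases hA_uq T z hz hadj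
    exact hz.2 (Finset.mem_erase.mpr ⟨hv1v, h1T⟩)
  have hA_mono : ∀ T : Finset V, v ∈ T → numCompIn G A T ≤ numCompIn G A (T.erase v) := by
    intro T hvT
    conv_lhs => rw [show numCompIn G A T
      = Nat.card (G.induce (((↑A : Set V) \ ↑(T.erase v)) \ {v})).ConnectedComponent by
        rw [hA_sets T hvT]; rfl]
    exact le_card_erase (G := G) _ v v1 (hA_mem T) (hA_uq T)
  -- same for the B side
  have hB_sets : ∀ T : Finset V, v ∈ T →
      ((↑B : Set V) \ ↑(T.erase v)) \ {v} = (↑B : Set V) \ ↑T := by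
    intro T hvT
    ext w
    simp only [Set.mem_diff, Finset.mem_coe, Finset.mem_erase, Set.mem_singleton_iff]
    constructor
    · rintro ⟨⟨hwB, hw⟩, hwv⟩
      exact ⟨hwB, fun hwT => hw ⟨hwv, hwT⟩⟩
    · rintro ⟨hwB, hw⟩
      have hwv : w ≠ v := fun h => hw (h ▸ hvT)
      exact ⟨⟨hwB, fun h => hw h.2⟩, hwv⟩
  have hB_mem : ∀ T : Finset V, v ∈ (↑B : Set V) \ ↑(T.erase v) :=
    fun T => ⟨hvB, fun h => (Finset.mem_erase.mp h).1 rfl⟩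
  have hB_uq : ∀ (T : Finset V), ∀ z ∈ (↑B : Set V) \ ↑(T.erase v), G.Adj v z → z = v2 := by
    rintro T z ⟨hzB, -⟩ hadj
    rcases hnbr z hadj with rfl | rfl
    · exact absurd hzB hv1B
    · rfl
  have hB_pend : ∀ T : Finset V, v ∈ T → v2 ∉ T →
      numCompIn G B (T.erase v) = numCompIn G B T := by
    intro T hvT h2T
    unfold numCompIn
    rw [← hB_sets T hvT]
    exact pendant_card (G := G) _ v v2 (hB_mem T)
      ⟨hv2B, fun h => h2T (Finset.mem_of_mem_erase h)⟩ hv2v hadj2 (hB_uq T)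
  have hB_iso : ∀ T : Finset V, v ∈ T → v2 ∈ T →
      numCompIn G B (T.erase v) = numCompIn G B T + 1 := by
    intro T hvT h2T
    unfold numCompIn
    rw [← hB_sets T hvT]
    refine isolated_card (G := G) _ v (hB_mem T) ?_
    intro z hz hadj
    rcases hB_uq T z hz hadj
    exact hz.2 (Finset.mem_erase.mpr ⟨hv2v, h2T⟩)
  have hB_mono : ∀ T : Finset V, v ∈ T → numCompIn G B T ≤ numCompIn G B (T.erase v) := by
    intro T hvT
    conv_lhs => rw [show numCompIn G B T
      = Nat.card (G.induce (((↑B : Set V) \ ↑(T.erase v)) \ {v})).ConnectedComponent by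
        rw [hB_sets T hvT]; rfl]
    exact le_card_erase (G := G) _ v v2 (hB_mem T) (hB_uq T)
  -- cut sets of the pieces never contain v
  have noVA : ∀ S1 : Finset V, IsCutSetIn G A S1 → v ∉ S1 := by
    rintro S1 ⟨hsub, hcut⟩ hvS1
    have hne : S1 ≠ ∅ := fun h => by simp [h] at hvS1
    have hlt := (hcut.resolve_left hne).2 v hvS1
    exact absurd hlt (not_lt.mpr (hA_mono S1 hvS1))
  have noVB : ∀ S2 : Finset V, IsCutSetIn G B S2 → v ∉ S2 := by
    rintro S2 ⟨hsub, hcut⟩ hvS2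
    have hne : S2 ≠ ∅ := fun h => by simp [h] at hvS2
    have hlt := (hcut.resolve_left hne).2 v hvS2
    exact absurd hlt (not_lt.mpr (hB_mono S2 hvS2))
  -- pendant lemmas, union form
  have hpend1 : ∀ T : Finset V, v ∉ T → v1 ∉ T →
      numCompIn G A (T ∪ {v}) = numCompIn G A T := by
    intro T hvT h1T
    have herase : (T ∪ {v}).erase v = T := by
      ext w
      simp only [Finset.mem_erase, Finset.mem_union, Finset.mem_singleton]
      constructor
      · rintro ⟨hwv, h | h⟩
        · exact h
        · exact absurd h hwv
      · intro h
        exact ⟨fun he => hvT (he ▸ h), Or.inl h⟩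
    have := hA_pend (T ∪ {v}) (Finset.mem_union_right _ (Finset.mem_singleton_self v))
      (by simp only [Finset.mem_union, Finset.mem_singleton]; rintro (h | h)
          · exact h1T h
          · exact hv1v h)
    rw [herase] at this
    exact this.symm
  have hpend2 : ∀ T : Finset V, v ∉ T → v2 ∉ T →
      numCompIn G B (T ∪ {v}) = numCompIn G B T := by
    intro T hvT h2T
    have herase : (T ∪ {v}).erase v = T := by
      ext w
      simp only [Finset.mem_erase, Finset.mem_union, Finset.mem_singleton]
      constructor
      · rintro ⟨hwv, h | h⟩
        · exact h
        · exact absurd h hwv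
      · intro h
        exact ⟨fun he => hvT (he ▸ h), Or.inl h⟩
    have := hB_pend (T ∪ {v}) (Finset.mem_union_right _ (Finset.mem_singleton_self v))
      (by simp only [Finset.mem_union, Finset.mem_singleton]; rintro (h | h)
          · exact h2T h
          · exact hv2v h)
    rw [herase] at this
    exact this.symm
  -- main equivalence
  intro S
  constructor
  · -- forward direction
    intro hS
    rcases hS with hSe | ⟨hSne, hS⟩
    · left
      exact ⟨∅, ∅, ⟨Finset.empty_subset _, Or.inl rfl⟩, ⟨Finset.empty_subset _, Or.inl rfl⟩,
        by simp [hSe]⟩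
    by_cases hvS : v ∈ S
    · -- v ∈ S : right disjunct
      right
      have hvSe : v ∉ S.erase v := fun h => (Finset.mem_erase.mp h).1 rfl
      have l1 := hL1 S hvS
      have l2 := hL2 (S.erase v) hvSe
      have hltv := hS v hvS
      have hma := hA_mono S hvS
      have hmb := hB_mono S hvS
      have hae : numCompIn G A (S.erase v) = numCompIn G A S := by omega
      have hbe : numCompIn G B (S.erase v) = numCompIn G B S := by omega
      have hv1S : v1 ∉ S := by
        intro h
        have := hA_iso S hvS h
        omega
      have hv2S : v2 ∉ S := by
        intro h
        have := hB_iso S hvS h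
        omega
      refine ⟨(S ∩ A).erase v, (S ∩ B).erase v, ?_, ?_, ?_, ?_, ?_⟩
      · refine ⟨(Finset.erase_subset _ _).trans Finset.inter_subset_right, ?_⟩
        by_cases hS1e : (S ∩ A).erase v = ∅
        · exact Or.inl hS1e
        refine Or.inr ⟨hS1e, ?_⟩
        intro i hi
        obtain ⟨hiv, hiSA⟩ := Finset.mem_erase.mp hi
        obtain ⟨hiS, hiA⟩ := Finset.mem_inter.mp hiSA
        have hiB : i ∉ B := fun h => hiv (hABv i hiA h)
        have hvSei : v ∈ S.erase i := Finset.mem_erase.mpr ⟨fun h => hiv h.symm, hvS⟩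
        have hb_e : numCompIn G B (S.erase i) = numCompIn G B S := by
          refine hcongrIn B _ _ ?_
          intro w hw
          exact ⟨fun h => Finset.mem_of_mem_erase h,
            fun h => Finset.mem_erase.mpr ⟨fun he => hiB (he ▸ hw), h⟩⟩
        have l1' := hL1 (S.erase i) hvSei
        have hlti := hS i hiS
        have ea1 : numCompIn G A ((S ∩ A).erase v) = numCompIn G A (S.erase v) := by
          refine hcongrIn A _ _ ?_
          intro w hw
          simp only [Finset.mem_erase, Finset.mem_inter]
          constructor
          · rintro ⟨hwv, hwS, -⟩
            exact ⟨hwv, hwS⟩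
          · rintro ⟨hwv, hwS⟩
            exact ⟨hwv, hwS, hw⟩
        have ea2 : numCompIn G A (((S ∩ A).erase v).erase i)
            = numCompIn G A ((S.erase i).erase v) := by
          refine hcongrIn A _ _ ?_
          intro w hw
          simp only [Finset.mem_erase, Finset.mem_inter]
          constructor
          · rintro ⟨hwi, hwv, hwS, -⟩
            exact ⟨hwv, hwi, hwS⟩
          · rintro ⟨hwv, hwi, hwS⟩
            exact ⟨hwi, hwv, hwS, hw⟩
        have ea3 := hA_pend (S.erase i) hvSei
          (fun h => hv1S (Finset.mem_of_mem_erase h))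
        omega
      · refine ⟨(Finset.erase_subset _ _).trans Finset.inter_subset_right, ?_⟩
        by_cases hS2e : (S ∩ B).erase v = ∅
        · exact Or.inl hS2e
        refine Or.inr ⟨hS2e, ?_⟩
        intro i hi
        obtain ⟨hiv, hiSB⟩ := Finset.mem_erase.mp hi
        obtain ⟨hiS, hiB⟩ := Finset.mem_inter.mp hiSB
        have hiA : i ∉ A := fun h => hiv (hABv i h hiB)
        have hvSei : v ∈ S.erase i := Finset.mem_erase.mpr ⟨fun h => hiv h.symm, hvS⟩
        have ha_e : numCompIn G A (S.erase i) = numCompIn G A S := by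
          refine hcongrIn A _ _ ?_
          intro w hw
          exact ⟨fun h => Finset.mem_of_mem_erase h,
            fun h => Finset.mem_erase.mpr ⟨fun he => hiA (he ▸ hw), h⟩⟩
        have l1' := hL1 (S.erase i) hvSei
        have hlti := hS i hiS
        have eb1 : numCompIn G B ((S ∩ B).erase v) = numCompIn G B (S.erase v) := by
          refine hcongrIn B _ _ ?_
          intro w hw
          simp only [Finset.mem_erase, Finset.mem_inter]
          constructor
          · rintro ⟨hwv, hwS, -⟩
            exact ⟨hwv, hwS⟩
          · rintro ⟨hwv, hwS⟩
            exact ⟨hwv, hwS, hw⟩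
        have eb2 : numCompIn G B (((S ∩ B).erase v).erase i)
            = numCompIn G B ((S.erase i).erase v) := by
          refine hcongrIn B _ _ ?_
          intro w hw
          simp only [Finset.mem_erase, Finset.mem_inter]
          constructor
          · rintro ⟨hwi, hwv, hwS, -⟩
            exact ⟨hwv, hwi, hwS⟩
          · rintro ⟨hwv, hwi, hwS⟩
            exact ⟨hwi, hwv, hwS, hw⟩
        have eb3 := hB_pend (S.erase i) hvSei
          (fun h => hv2S (Finset.mem_of_mem_erase h))
        omega
      · exact fun h => hv1S (Finset.mem_inter.mp (Finset.mem_of_mem_erase h)).1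
      · exact fun h => hv2S (Finset.mem_inter.mp (Finset.mem_of_mem_erase h)).1
      · ext w
        simp only [Finset.mem_union, Finset.mem_erase, Finset.mem_inter, Finset.mem_singleton]
        constructor
        · intro hwS
          by_cases hwv : w = v
          · exact Or.inr hwv
          rcases hmemAB w with h | h
          · exact Or.inl (Or.inl ⟨hwv, hwS, h⟩)
          · exact Or.inl (Or.inr ⟨hwv, hwS, h⟩)
        · rintro ((⟨-, h, -⟩ | ⟨-, h, -⟩) | rfl)
          · exact h
          · exact h
          · exact hvS
    · -- v ∉ S : left disjunct
      left
      refine ⟨S ∩ A, S ∩ B, ⟨Finset.inter_subset_right, ?_⟩,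
        ⟨Finset.inter_subset_right, ?_⟩, ?_⟩
      · by_cases hS1e : S ∩ A = ∅
        · exact Or.inl hS1e
        refine Or.inr ⟨hS1e, ?_⟩
        intro i hi
        obtain ⟨hiS, hiA⟩ := Finset.mem_inter.mp hi
        have hiB : i ∉ B := fun h => hvS ((hABv i hiA h) ▸ hiS)
        have hvSei : v ∉ S.erase i := fun h => hvS (Finset.mem_of_mem_erase h)
        have l2 := hL2 S hvS
        have l2' := hL2 (S.erase i) hvSei
        have hlti := hS i hiS
        have hb_e : numCompIn G B (S.erase i) = numCompIn G B S := by
          refine hcongrIn B _ _ ?_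
          intro w hw
          exact ⟨fun h => Finset.mem_of_mem_erase h,
            fun h => Finset.mem_erase.mpr ⟨fun he => hiB (he ▸ hw), h⟩⟩
        have ea1 : numCompIn G A (S ∩ A) = numCompIn G A S := by
          refine hcongrIn A _ _ ?_
          intro w hw
          simp only [Finset.mem_inter]
          exact ⟨fun h => h.1, fun h => ⟨h, hw⟩⟩
        have ea2 : numCompIn G A ((S ∩ A).erase i) = numCompIn G A (S.erase i) := by
          refine hcongrIn A _ _ ?_
          intro w hw
          simp only [Finset.mem_erase, Finset.mem_inter]
          exact ⟨fun h => ⟨h.1, h.2.1⟩, fun h => ⟨h.1, h.2, hw⟩⟩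
        omega
      · by_cases hS2e : S ∩ B = ∅
        · exact Or.inl hS2e
        refine Or.inr ⟨hS2e, ?_⟩
        intro i hi
        obtain ⟨hiS, hiB⟩ := Finset.mem_inter.mp hi
        have hiA : i ∉ A := fun h => hvS ((hABv i h hiB) ▸ hiS)
        have hvSei : v ∉ S.erase i := fun h => hvS (Finset.mem_of_mem_erase h)
        have l2 := hL2 S hvS
        have l2' := hL2 (S.erase i) hvSei
        have hlti := hS i hiS
        have ha_e : numCompIn G A (S.erase i) = numCompIn G A S := by
          refine hcongrIn A _ _ ?_
          intro w hw
          exact ⟨fun h => Finset.mem_of_mem_erase h,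
            fun h => Finset.mem_erase.mpr ⟨fun he => hiA (he ▸ hw), h⟩⟩
        have eb1 : numCompIn G B (S ∩ B) = numCompIn G B S := by
          refine hcongrIn B _ _ ?_
          intro w hw
          simp only [Finset.mem_inter]
          exact ⟨fun h => h.1, fun h => ⟨h, hw⟩⟩
        have eb2 : numCompIn G B ((S ∩ B).erase i) = numCompIn G B (S.erase i) := by
          refine hcongrIn B _ _ ?_
          intro w hw
          simp only [Finset.mem_erase, Finset.mem_inter]
          exact ⟨fun h => ⟨h.1, h.2.1⟩, fun h => ⟨h.1, h.2, hw⟩⟩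
        omega
      · ext w
        simp only [Finset.mem_union, Finset.mem_inter]
        constructor
        · intro hwS
          rcases hmemAB w with h | h
          · exact Or.inl ⟨hwS, h⟩
          · exact Or.inr ⟨hwS, h⟩
        · rintro (⟨h, -⟩ | ⟨h, -⟩) <;> exact h
  · -- backward direction
    intro h
    rcases h with ⟨S1, S2, h1, h2, rfl⟩ | ⟨S1, S2, h1, h2, hv1S1, hv2S2, rfl⟩
    · -- simple union
      have hva := noVA S1 h1
      have hvb := noVB S2 h2
      have hS1A := h1.1
      have hS2B := h2.1
      have hS1B : ∀ i ∈ S1, i ∉ B := fun i hi hB => hva ((hABv i (hS1A hi) hB) ▸ hi)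
      have hS2A : ∀ i ∈ S2, i ∉ A := fun i hi hA => hvb ((hABv i hA (hS2B hi)) ▸ hi)
      have hvU : v ∉ S1 ∪ S2 := by
        simp only [Finset.mem_union]
        rintro (h | h)
        · exact hva h
        · exact hvb h
      by_cases hUe : S1 ∪ S2 = ∅
      · exact Or.inl hUe
      refine Or.inr ⟨hUe, ?_⟩
      intro i hi
      have hvUe : v ∉ (S1 ∪ S2).erase i := fun h => hvU (Finset.mem_of_mem_erase h)
      have l2 := hL2 (S1 ∪ S2) hvU
      have l2' := hL2 ((S1 ∪ S2).erase i) hvUe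
      have ha1 : numCompIn G A (S1 ∪ S2) = numCompIn G A S1 := by
        refine hcongrIn A _ _ ?_
        intro w hw
        simp only [Finset.mem_union]
        constructor
        · rintro (h | h)
          · exact h
          · exact absurd hw (hS2A w h)
        · exact Or.inl
      have hb1 : numCompIn G B (S1 ∪ S2) = numCompIn G B S2 := by
        refine hcongrIn B _ _ ?_
        intro w hw
        simp only [Finset.mem_union]
        constructor
        · rintro (h | h)
          · exact absurd hw (hS1B w h)
          · exact h
        · exact Or.inr
      rcases Finset.mem_union.mp hi with hi1 | hi2
      · have hiB : i ∉ B := hS1B i hi1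
        have hb_e : numCompIn G B ((S1 ∪ S2).erase i) = numCompIn G B (S1 ∪ S2) := by
          refine hcongrIn B _ _ ?_
          intro w hw
          exact ⟨fun h => Finset.mem_of_mem_erase h,
            fun h => Finset.mem_erase.mpr ⟨fun he => hiB (he ▸ hw), h⟩⟩
        have ea2 : numCompIn G A ((S1 ∪ S2).erase i) = numCompIn G A (S1.erase i) := by
          refine hcongrIn A _ _ ?_
          intro w hw
          simp only [Finset.mem_erase, Finset.mem_union]
          constructor
          · rintro ⟨hwi, h | h⟩
            · exact ⟨hwi, h⟩
            · exact absurd hw (hS2A w h)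
          · rintro ⟨hwi, h⟩
            exact ⟨hwi, Or.inl h⟩
        have hne1 : S1 ≠ ∅ := Finset.ne_empty_of_mem hi1
        have hlt := (h1.2.resolve_left hne1).2 i hi1
        omega
      · have hiA : i ∉ A := hS2A i hi2
        have ha_e : numCompIn G A ((S1 ∪ S2).erase i) = numCompIn G A (S1 ∪ S2) := by
          refine hcongrIn A _ _ ?_
          intro w hw
          exact ⟨fun h => Finset.mem_of_mem_erase h,
            fun h => Finset.mem_erase.mpr ⟨fun he => hiA (he ▸ hw), h⟩⟩
        have eb2 : numCompIn G B ((S1 ∪ S2).erase i) = numCompIn G B (S2.erase i) := by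
          refine hcongrIn B _ _ ?_
          intro w hw
          simp only [Finset.mem_erase, Finset.mem_union]
          constructor
          · rintro ⟨hwi, h | h⟩
            · exact absurd hw (hS1B w h)
            · exact ⟨hwi, h⟩
          · rintro ⟨hwi, h⟩
            exact ⟨hwi, Or.inr h⟩
        have hne2 : S2 ≠ ∅ := Finset.ne_empty_of_mem hi2
        have hlt := (h2.2.resolve_left hne2).2 i hi2
        omega
    · -- union with v
      have hva := noVA S1 h1
      have hvb := noVB S2 h2
      have hS1A := h1.1
      have hS2B := h2.1
      have hS1B : ∀ i ∈ S1, i ∉ B := fun i hi hB => hva ((hABv i (hS1A hi) hB) ▸ hi)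
      have hS2A : ∀ i ∈ S2, i ∉ A := fun i hi hA => hvb ((hABv i hA (hS2B hi)) ▸ hi)
      have hvU : v ∈ S1 ∪ S2 ∪ {v} :=
        Finset.mem_union_right _ (Finset.mem_singleton_self v)
      have hvU0 : v ∉ S1 ∪ S2 := by
        simp only [Finset.mem_union]
        rintro (h | h)
        · exact hva h
        · exact hvb h
      have hne : S1 ∪ S2 ∪ {v} ≠ ∅ := Finset.ne_empty_of_mem hvU
      -- main component counts
      have eqa : numCompIn G A (S1 ∪ S2 ∪ {v}) = numCompIn G A S1 := by
        have e1 : numCompIn G A (S1 ∪ S2 ∪ {v}) = numCompIn G A (S1 ∪ {v}) := by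
          refine hcongrIn A _ _ ?_
          intro w hw
          simp only [Finset.mem_union, Finset.mem_singleton]
          constructor
          · rintro ((h | h) | h)
            · exact Or.inl h
            · exact absurd hw (hS2A w h)
            · exact Or.inr h
          · rintro (h | h)
            · exact Or.inl (Or.inl h)
            · exact Or.inr h
        rw [e1, hpend1 S1 hva hv1S1]
      have eqb : numCompIn G B (S1 ∪ S2 ∪ {v}) = numCompIn G B S2 := by
        have e1 : numCompIn G B (S1 ∪ S2 ∪ {v}) = numCompIn G B (S2 ∪ {v}) := by
          refine hcongrIn B _ _ ?_
          intro w hw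
          simp only [Finset.mem_union, Finset.mem_singleton]
          constructor
          · rintro ((h | h) | h)
            · exact absurd hw (hS1B w h)
            · exact Or.inl h
            · exact Or.inr h
          · rintro (h | h)
            · exact Or.inl (Or.inr h)
            · exact Or.inr h
        rw [e1, hpend2 S2 hvb hv2S2]
      have l1 := hL1 (S1 ∪ S2 ∪ {v}) hvU
      refine Or.inr ⟨hne, ?_⟩
      intro i hi
      rcases Finset.mem_union.mp hi with hi12 | hiv
      · rcases Finset.mem_union.mp hi12 with hi1 | hi2
        · -- i ∈ S1
          have hiv : i ≠ v := fun h => hva (h ▸ hi1)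
          have hiB : i ∉ B := hS1B i hi1
          have hvUe : v ∈ (S1 ∪ S2 ∪ {v}).erase i :=
            Finset.mem_erase.mpr ⟨fun h => hiv h.symm, hvU⟩
          have l1' := hL1 ((S1 ∪ S2 ∪ {v}).erase i) hvUe
          have ea2 : numCompIn G A ((S1 ∪ S2 ∪ {v}).erase i)
              = numCompIn G A ((S1.erase i) ∪ {v}) := by
            refine hcongrIn A _ _ ?_
            intro w hw
            simp only [Finset.mem_erase, Finset.mem_union, Finset.mem_singleton]
            constructor
            · rintro ⟨hwi, (h | h) | h⟩
              · exact Or.inl ⟨hwi, h⟩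
              · exact absurd hw (hS2A w h)
              · exact Or.inr h
            · rintro (⟨hwi, h⟩ | h)
              · exact ⟨hwi, Or.inl (Or.inl h)⟩
              · exact ⟨fun he => hiv (he.symm.trans h), Or.inr h⟩
          have ea3 : numCompIn G A ((S1.erase i) ∪ {v}) = numCompIn G A (S1.erase i) :=
            hpend1 (S1.erase i) (fun h => hva (Finset.mem_of_mem_erase h))
              (fun h => hv1S1 (Finset.mem_of_mem_erase h))
          have eb2 : numCompIn G B ((S1 ∪ S2 ∪ {v}).erase i)
              = numCompIn G B (S1 ∪ S2 ∪ {v}) := by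
            refine hcongrIn B _ _ ?_
            intro w hw
            exact ⟨fun h => Finset.mem_of_mem_erase h,
              fun h => Finset.mem_erase.mpr ⟨fun he => hiB (he ▸ hw), h⟩⟩
          have hne1 : S1 ≠ ∅ := Finset.ne_empty_of_mem hi1
          have hlt := (h1.2.resolve_left hne1).2 i hi1
          omega
        · -- i ∈ S2
          have hiv : i ≠ v := fun h => hvb (h ▸ hi2)
          have hiA : i ∉ A := hS2A i hi2
          have hvUe : v ∈ (S1 ∪ S2 ∪ {v}).erase i :=
            Finset.mem_erase.mpr ⟨fun h => hiv h.symm, hvU⟩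
          have l1' := hL1 ((S1 ∪ S2 ∪ {v}).erase i) hvUe
          have eb2 : numCompIn G B ((S1 ∪ S2 ∪ {v}).erase i)
              = numCompIn G B ((S2.erase i) ∪ {v}) := by
            refine hcongrIn B _ _ ?_
            intro w hw
            simp only [Finset.mem_erase, Finset.mem_union, Finset.mem_singleton]
            constructor
            · rintro ⟨hwi, (h | h) | h⟩
              · exact absurd hw (hS1B w h)
              · exact Or.inl ⟨hwi, h⟩
              · exact Or.inr h
            · rintro (⟨hwi, h⟩ | h)
              · exact ⟨hwi, Or.inl (Or.inr h)⟩
              · exact ⟨fun he => hiv (he.symm.trans h), Or.inr h⟩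
          have eb3 : numCompIn G B ((S2.erase i) ∪ {v}) = numCompIn G B (S2.erase i) :=
            hpend2 (S2.erase i) (fun h => hvb (Finset.mem_of_mem_erase h))
              (fun h => hv2S2 (Finset.mem_of_mem_erase h))
          have ea2 : numCompIn G A ((S1 ∪ S2 ∪ {v}).erase i)
              = numCompIn G A (S1 ∪ S2 ∪ {v}) := by
            refine hcongrIn A _ _ ?_
            intro w hw
            exact ⟨fun h => Finset.mem_of_mem_erase h,
              fun h => Finset.mem_erase.mpr ⟨fun he => hiA (he ▸ hw), h⟩⟩
          have hne2 : S2 ≠ ∅ := Finset.ne_empty_of_mem hi2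
          have hlt := (h2.2.resolve_left hne2).2 i hi2
          omega
      · -- i = v
        have hiv' : i = v := Finset.mem_singleton.mp hiv
        rw [hiv']
        have hSev : (S1 ∪ S2 ∪ {v}).erase v = S1 ∪ S2 := by
          ext w
          simp only [Finset.mem_erase, Finset.mem_union, Finset.mem_singleton]
          constructor
          · rintro ⟨hwv, (h | h) | h⟩
            · exact Or.inl h
            · exact Or.inr h
            · exact absurd h hwv
          · rintro (h | h)
            · exact ⟨fun he => hva (he ▸ h), Or.inl (Or.inl h)⟩
            · exact ⟨fun he => hvb (he ▸ h), Or.inl (Or.inr h)⟩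
        have l2 := hL2 (S1 ∪ S2) hvU0
        have au : numCompIn G A (S1 ∪ S2) = numCompIn G A S1 := by
          refine hcongrIn A _ _ ?_
          intro w hw
          simp only [Finset.mem_union]
          constructor
          · rintro (h | h)
            · exact h
            · exact absurd hw (hS2A w h)
          · exact Or.inl
        have bu : numCompIn G B (S1 ∪ S2) = numCompIn G B S2 := by
          refine hcongrIn B _ _ ?_
          intro w hw
          simp only [Finset.mem_union]
          constructor
          · rintro (h | h)
            · exact absurd hw (hS1B w h)
            · exact h
          · exact Or.inr
        rw [hSev]
        omega
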